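/- arXiv:1901.05781 — 2 statements merged into one kernel-verified Lean document; each statement's English description precedes it below -/
import Mathlib

section
/- Let (W,S) be a Coxeter system of finite rank and let t₁,…,t_n, t ∈ T be reflections. Then for every w in the subgroup ⟨t₁,…,t_n⟩ generated by t₁,…,t_n, the tuple (t₁,…,t_n, t, t) lies in the same Hurwitz orbit as (t₁,…,t_n, w t w⁻¹, w t w⁻¹). -/
/-- A single Hurwitz move: replace consecutive entries `(a, b)` by `(a * b * a⁻¹, a)`. -/
def HurwitzMove {W : Type*} [Group W] (l l' : List W) : Prop :=
  ∃ (u v : List W) (a b : W),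
    l = u ++ a :: b :: v ∧ l' = u ++ (a * b * a⁻¹) :: a :: v

/-- Two tuples lie in the same Hurwitz orbit iff one is obtained from the other by a finite
sequence of Hurwitz moves and their inverses. -/
def HurwitzEquiv {W : Type*} [Group W] : List W → List W → Prop :=
  Relation.ReflTransGen (fun x y => HurwitzMove x y ∨ HurwitzMove y x)

/-- A Coxeter element is a product of all the simple reflections, each occurring exactly
once, in some order. -/
def CoxeterSystem.IsCoxeterElement {B W : Type*} [Group W] {M : CoxeterMatrix B}
    (cs : CoxeterSystem M W) (c : W) : Prop :=
  ∃ l : List B, l.Nodup ∧ (∀ i : B, i ∈ l) ∧ c = (l.map cs.simple).prod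

section aux

variable {W : Type*} [Group W]

theorem HurwitzEquiv.refl (l : List W) : HurwitzEquiv l l := Relation.ReflTransGen.refl

theorem HurwitzEquiv.trans {l₁ l₂ l₃ : List W} (h : HurwitzEquiv l₁ l₂)
    (h' : HurwitzEquiv l₂ l₃) : HurwitzEquiv l₁ l₃ := Relation.ReflTransGen.trans h h'

theorem HurwitzEquiv.symm {l₁ l₂ : List W} (h : HurwitzEquiv l₁ l₂) : HurwitzEquiv l₂ l₁ :=
  by haveI : Std.Symm (fun x y : List W => HurwitzMove x y ∨ HurwitzMove y x) := ⟨fun _ _ h => h.symm⟩; exact (Relation.ReflTransGen.symmetric).symm _ _ h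

theorem HurwitzMove.equiv {l₁ l₂ : List W} (h : HurwitzMove l₁ l₂) : HurwitzEquiv l₁ l₂ :=
  Relation.ReflTransGen.single (Or.inl h)

theorem hurwitzMove_mk (u v : List W) (a b : W) :
    HurwitzMove (u ++ a :: b :: v) (u ++ (a * b * a⁻¹) :: a :: v) :=
  ⟨u, v, a, b, rfl, rfl⟩

/-- Push an involution `a` rightwards through a list `v`, conjugating its entries. -/
theorem hurwitzEquiv_push (a : W) (ha : a * a = 1) (v : List W) :
    ∀ (u rest : List W),
      HurwitzEquiv (u ++ a :: (v ++ rest)) (u ++ (v.map fun x => a * x * a) ++ a :: rest) := by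
  have hainv : a⁻¹ = a := inv_eq_of_mul_eq_one_right ha
  induction v with
  | nil =>
    intro u rest
    have : HurwitzEquiv (u ++ a :: rest) (u ++ a :: rest) := HurwitzEquiv.refl _
    simpa using this
  | cons b v ih =>
    intro u rest
    have m : HurwitzMove (u ++ a :: b :: (v ++ rest))
        (u ++ (a * b * a⁻¹) :: a :: (v ++ rest)) := hurwitzMove_mk u (v ++ rest) a b
    refine HurwitzEquiv.trans m.equiv ?_
    have := ih (u ++ [a * b * a⁻¹]) rest
    simpa [hainv, List.append_assoc] using this

/-- The three-strand conjugation of a trailing pair by an adjacent involution. -/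
theorem hurwitzEquiv_three (u : List W) (a t : W) (ha : a * a = 1) (ht : t * t = 1) :
    HurwitzEquiv (u ++ [a, t, t]) (u ++ [a, a * t * a, a * t * a]) := by
  have hainv : a⁻¹ = a := inv_eq_of_mul_eq_one_right ha
  have htinv : t⁻¹ = t := inv_eq_of_mul_eq_one_right ht
  have haa : ∀ x : W, a * (a * x) = x := fun x => by rw [← mul_assoc, ha, one_mul]
  have htt : ∀ x : W, t * (t * x) = x := fun x => by rw [← mul_assoc, ht, one_mul]
  have m1 : HurwitzMove (u ++ [a, t, t]) (u ++ [a * t * a, a, t]) := by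
    simpa [hainv] using hurwitzMove_mk u [t] a t
  have m2 : HurwitzMove (u ++ [a * t * a, a, t]) (u ++ [a * t * a, a * t * a, a]) := by
    simpa [hainv, List.append_assoc] using hurwitzMove_mk (u ++ [a * t * a]) [] a t
  have m3 : HurwitzMove (u ++ [a * t * a, a * t * a, a])
      (u ++ [a * t * a, a * (t * (a * (t * a))), a * t * a]) := by
    have := hurwitzMove_mk (u ++ [a * t * a]) [] (a * t * a) a
    have key : a * t * a * a * (a * t * a)⁻¹ = a * (t * (a * (t * a))) := by
      simp [mul_inv_rev, hainv, htinv, mul_assoc, haa, htt, ha, ht]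
    rw [key] at this
    simpa [List.append_assoc] using this
  have m4 : HurwitzMove (u ++ [a * t * a, a * (t * (a * (t * a))), a * t * a])
      (u ++ [a, a * t * a, a * t * a]) := by
    have := hurwitzMove_mk u [a * t * a] (a * t * a) (a * (t * (a * (t * a))))
    have key : a * t * a * (a * (t * (a * (t * a)))) * (a * t * a)⁻¹ = a := by
      simp [mul_inv_rev, hainv, htinv, mul_assoc, haa, htt, ha, ht]
    rw [key] at this
    exact this
  exact (((m1.equiv.trans m2.equiv).trans m3.equiv).trans m4.equiv)

/-- Conjugate a trailing equal pair by one preceding involution factor. -/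
theorem hurwitzEquiv_pair_conj_single (u v : List W) (a s : W) (ha : a * a = 1)
    (hs : s * s = 1) :
    HurwitzEquiv (u ++ a :: v ++ [s, s]) (u ++ a :: v ++ [a * s * a, a * s * a]) := by
  set v' := v.map fun x => a * x * a with hv'
  have push : HurwitzEquiv (u ++ a :: (v ++ [s, s])) (u ++ v' ++ a :: [s, s]) :=
    hurwitzEquiv_push a ha v u [s, s]
  have three : HurwitzEquiv ((u ++ v') ++ [a, s, s]) ((u ++ v') ++ [a, a * s * a, a * s * a]) :=
    hurwitzEquiv_three (u ++ v') a s ha hs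
  have pull : HurwitzEquiv (u ++ a :: (v ++ [a * s * a, a * s * a]))
      (u ++ v' ++ a :: [a * s * a, a * s * a]) :=
    hurwitzEquiv_push a ha v u [a * s * a, a * s * a]
  have e1 : u ++ a :: v ++ [s, s] = u ++ a :: (v ++ [s, s]) := by simp
  have e2 : u ++ v' ++ a :: [s, s] = (u ++ v') ++ [a, s, s] := by simp
  have e3 : (u ++ v') ++ [a, a * s * a, a * s * a]
      = u ++ v' ++ a :: [a * s * a, a * s * a] := by simp
  have e4 : u ++ a :: v ++ [a * s * a, a * s * a]
      = u ++ a :: (v ++ [a * s * a, a * s * a]) := by simp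
  rw [e1, e4]
  exact ((push.trans (e2 ▸ three)).trans (e3 ▸ pull.symm))

end aux

/-- A trailing pair `(t, t)` of equal reflections can be conjugated by any element of the
subgroup generated by the preceding factors, up to Hurwitz equivalence. -/
theorem hurwitzEquiv_append_pair_conj
    {B W : Type*} [Group W] [Fintype B] {M : CoxeterMatrix B}
    (cs : CoxeterSystem M W) (ts : List W) (t : W)
    (hts : ∀ x ∈ ts, cs.IsReflection x) (ht : cs.IsReflection t)
    (w : W) (hw : w ∈ Subgroup.closure {x | x ∈ ts}) :
    HurwitzEquiv (ts ++ [t, t]) (ts ++ [w * t * w⁻¹, w * t * w⁻¹]) := by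
  have main : ∀ w ∈ Subgroup.closure {x | x ∈ ts}, ∀ s : W, s * s = 1 →
      HurwitzEquiv (ts ++ [s, s]) (ts ++ [w * s * w⁻¹, w * s * w⁻¹]) := by
    intro w hw
    induction hw using Subgroup.closure_induction with
    | mem a haa =>
      intro s hs
      have ha : a * a = 1 := ((hts a haa).mul_self)
      have hainv : a⁻¹ = a := inv_eq_of_mul_eq_one_right ha
      obtain ⟨u, v, rfl⟩ := List.append_of_mem haa
      rw [hainv]
      exact hurwitzEquiv_pair_conj_single u v a s ha hs
    | one => intro s hs; simp; exact HurwitzEquiv.refl _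
    | mul x y hx hy ihx ihy =>
      intro s hs
      have hy' := ihy s hs
      have hconj : (y * s * y⁻¹) * (y * s * y⁻¹) = 1 := by
        have : (y * s * y⁻¹) * (y * s * y⁻¹) = y * (s * s) * y⁻¹ := by group
        rw [this, hs]; group
      have hx' := ihx (y * s * y⁻¹) hconj
      have e : x * (y * s * y⁻¹) * x⁻¹ = (x * y) * s * (x * y)⁻¹ := by group
      rw [e] at hx'
      exact hy'.trans hx'
    | inv x hx ihx =>
      intro s hs
      have hs' : (x⁻¹ * s * x) * (x⁻¹ * s * x) = 1 := by
        have : (x⁻¹ * s * x) * (x⁻¹ * s * x) = x⁻¹ * (s * s) * x := by group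
        rw [this, hs]; group
      have := ihx (x⁻¹ * s * x) hs'
      have e : x * (x⁻¹ * s * x) * x⁻¹ = s := by group
      rw [e] at this
      have e2 : x⁻¹ * s * x = x⁻¹ * s * x⁻¹⁻¹ := by group
      rw [← e2]
      exact this.symm
  exact main w hw t ht.mul_self
end

section
/- Let (W,S) be a Coxeter system of finite rank and let r, t ∈ T be reflections. Then the tuple (t, t, r, r) lies in the same Hurwitz orbit as (r, r, t, t). -/
/-- For reflections `t` and `r`, the tuple `(t, t, r, r)` lies in the same Hurwitz orbit as
`(r, r, t, t)`. -/
theorem hurwitzEquiv_pair_swap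
    {B W : Type*} [Group W] [Fintype B] {M : CoxeterMatrix B}
    (cs : CoxeterSystem M W) (t r : W)
    (ht : cs.IsReflection t) (hr : cs.IsReflection r) :
    HurwitzEquiv [t, t, r, r] [r, r, t, t] := by
  have hri : r⁻¹ = r := hr.inv
  have hru : ∀ x : W, r * (r * x) = x := fun x => by rw [← mul_assoc, hr.mul_self, one_mul]
  have step : ∀ (u v : List W) (a b : W),
      HurwitzEquiv (u ++ (a * b * a⁻¹) :: a :: v) (u ++ a :: b :: v) :=
    fun u v a b => Relation.ReflTransGen.single (Or.inr ⟨u, v, a, b, rfl, rfl⟩)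
  have h1 : HurwitzEquiv [t, t, r, r] [t, r, r⁻¹ * t * r, r] := by
    have := step [t] [r] r (r⁻¹ * t * r)
    simpa [hri, mul_assoc, hru, hr.mul_self] using this
  have h2 : HurwitzEquiv [t, r, r⁻¹ * t * r, r] [r, r⁻¹ * t * r, r⁻¹ * t * r, r] := by
    have := step [] [r⁻¹ * t * r, r] r (r⁻¹ * t * r)
    simpa [hri, mul_assoc, hru, hr.mul_self] using this
  have h3 : HurwitzEquiv [r, r⁻¹ * t * r, r⁻¹ * t * r, r] [r, r⁻¹ * t * r, r, t] := by
    have := step [r, r⁻¹ * t * r] [] r t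
    simpa [hri, mul_assoc, hru, hr.mul_self] using this
  have h4 : HurwitzEquiv [r, r⁻¹ * t * r, r, t] [r, r, t, t] := by
    have := step [r] [t] r t
    simpa [hri, mul_assoc, hru, hr.mul_self] using this
  exact ((h1.trans h2).trans h3).trans h4
end
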